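/- Let A ↪ X be a cofibration of directed graphs, ℓ ≥ 0, x ∈ X∖A, and set a = π(x), with ℓ = d(a,x) < ∞. Let A_{*,ℓ}(a,x) be the subcomplex of the magnitude chain complex MC_{*,ℓ}(X) spanned by tuples (x₀,...,x_k) with x₀=a, x_k=x, and x₁,...,x_{k-1} ∈ A. Then the homology of A_{*,ℓ}(a,x) is a single copy of R in degree 1, generated by the class of the tuple (π(x), x). -/

import Mathlib

open scoped Classical

/-- A directed graph on a vertex type `V` (loops allowed, no parallel edges). -/
structure DGraph (V : Type) where
  Adj : V → V → Prop

namespace DGraph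
variable {V : Type}

/-- There is a directed path of length `n` (i.e. with `n` edges) from `x` to `y`. -/
def PathLen (G : DGraph V) (x y : V) (n : ℕ) : Prop :=
  ∃ f : ℕ → V, f 0 = x ∧ f n = y ∧ ∀ i < n, G.Adj (f i) (f (i + 1))

/-- The shortest path metric, with values in `ℕ∞ = ℕ ∪ {∞}`. -/
noncomputable def edist (G : DGraph V) (x y : V) : ℕ∞ :=
  sInf {n : ℕ∞ | ∃ m : ℕ, n = m ∧ G.PathLen x y m}

/-- The length of a tuple of vertices: the sum of consecutive distances. -/
noncomputable def tlen (G : DGraph V) {k : ℕ} (f : Fin (k + 1) → V) : ℕ∞ :=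
  ∑ i : Fin k, G.edist (f i.castSucc) (f i.succ)

/-- `y` is reachable from `x` by a directed path. -/
def Reaches (G : DGraph V) (x y : V) : Prop := Relation.ReflTransGen G.Adj x y

/-- The induced subgraph on a set of vertices. -/
def induce (G : DGraph V) (A : Set V) : DGraph A := ⟨fun a b => G.Adj a.1 b.1⟩

end DGraph

variable {V : Type}

/-- Validity of a tuple as a magnitude-chain basis element of degree `k` and length `ℓ`:
consecutive entries are distinct, at finite distance, and the total length is `ℓ`. -/
def MCValid (G : DGraph V) (k ℓ : ℕ) (f : Fin (k + 1) → V) : Prop :=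
  (∀ i : Fin k, G.edist (f i.castSucc) (f i.succ) ≠ 0 ∧ G.edist (f i.castSucc) (f i.succ) ≠ ⊤) ∧
    G.tlen f = (ℓ : ℕ∞)

/-- Basis of the magnitude chain group `MC_{k,ℓ}(G)`. -/
def MCb (G : DGraph V) (k ℓ : ℕ) : Type := {f : Fin (k + 1) → V // MCValid G k ℓ f}

/-- The magnitude chain group `MC_{k,ℓ}(G)` with coefficients in `R`. -/
abbrev MCMod (R : Type) [CommRing R] (G : DGraph V) (k ℓ : ℕ) := MCb G k ℓ →₀ R

/-- Deletion of the interior entry in position `j+1` of a `(k+2)`-tuple. -/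
def delMid {k : ℕ} (f : Fin (k + 2) → V) (j : Fin k) : Fin (k + 1) → V :=
  f ∘ (Fin.succAbove j.succ.castSucc)

/-- The magnitude-chain differential `MC_{k+1,ℓ}(G) → MC_{k,ℓ}(G)`: delete interior
entries with alternating signs, omitting any length-decreasing term. -/
noncomputable def dMC (R : Type) [CommRing R] (G : DGraph V) (k ℓ : ℕ) :
    MCMod R G (k + 1) ℓ →ₗ[R] MCMod R G k ℓ :=
  Finsupp.lsum R fun b => LinearMap.toSpanSingleton R _
    (∑ j : Fin k, (-1 : R) ^ ((j : ℕ) + 1) •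
      (if h : MCValid G k ℓ (delMid b.1 j) then
        Finsupp.single (⟨delMid b.1 j, h⟩ : MCb G k ℓ) (1 : R) else 0))

/-- The outgoing magnitude differential from degree `k` (zero in degree `0`). -/
noncomputable def dMCOut (R : Type) [CommRing R] (G : DGraph V) (ℓ : ℕ) :
    (k : ℕ) → MCMod R G k ℓ →ₗ[R] MCMod R G (k - 1) ℓ
  | 0 => 0
  | (k + 1) => dMC R G k ℓ

/-- Magnitude homology `MH_{k,ℓ}(G)` with coefficients in `R`. -/
noncomputable abbrev MH (R : Type) [CommRing R] (G : DGraph V) (k ℓ : ℕ) :=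
  letI : HasQuotient (LinearMap.ker (dMCOut R G ℓ k))
      (Submodule R (LinearMap.ker (dMCOut R G ℓ k))) :=
      @Submodule.hasQuotient R (LinearMap.ker (dMCOut R G ℓ k)) _ _ _
  LinearMap.ker (dMCOut R G ℓ k) ⧸
    (LinearMap.range (dMCOut R G ℓ (k + 1))).comap (LinearMap.ker (dMCOut R G ℓ k)).subtype

/-- Embedding of the magnitude chains into the free module on all tuples of vertices. -/
noncomputable def eMC (R : Type) [CommRing R] (G : DGraph V) (k ℓ : ℕ) :
    MCMod R G k ℓ →ₗ[R] ((Fin (k + 1) → V) →₀ R) :=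
  Finsupp.lmapDomain R R Subtype.val

/-- Basis of a subcomplex of the magnitude chains, cut out by a predicate `P` on tuples
(assumed closed under the interior deletions appearing in the differential). -/
def RCb (G : DGraph V) (P : ∀ k, (Fin (k + 1) → V) → Prop) (k ℓ : ℕ) : Type :=
  {f : Fin (k + 1) → V // MCValid G k ℓ f ∧ P k f}

/-- The degree-`k`, length-`ℓ` chain group of the subcomplex cut out by `P`. -/
abbrev RMod (R : Type) [CommRing R] (G : DGraph V) (P : ∀ k, (Fin (k + 1) → V) → Prop)
    (k ℓ : ℕ) := RCb G P k ℓ →₀ R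

/-- The differential of the subcomplex cut out by `P`. -/
noncomputable def dR (R : Type) [CommRing R] (G : DGraph V)
    (P : ∀ k, (Fin (k + 1) → V) → Prop) (k ℓ : ℕ) :
    RMod R G P (k + 1) ℓ →ₗ[R] RMod R G P k ℓ :=
  Finsupp.lsum R fun b => LinearMap.toSpanSingleton R _
    (∑ j : Fin k, (-1 : R) ^ ((j : ℕ) + 1) •
      (if h : MCValid G k ℓ (delMid b.1 j) ∧ P k (delMid b.1 j) then
        Finsupp.single (⟨delMid b.1 j, h⟩ : RCb G P k ℓ) (1 : R) else 0))

/-- The outgoing differential of the subcomplex from degree `k` (zero in degree `0`). -/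
noncomputable def dROut (R : Type) [CommRing R] (G : DGraph V)
    (P : ∀ k, (Fin (k + 1) → V) → Prop) (ℓ : ℕ) :
    (k : ℕ) → RMod R G P k ℓ →ₗ[R] RMod R G P (k - 1) ℓ
  | 0 => 0
  | (k + 1) => dR R G P k ℓ

/-- The degree-`k`, length-`ℓ` homology of the subcomplex cut out by `P`. -/
noncomputable abbrev RH (R : Type) [CommRing R] (G : DGraph V)
    (P : ∀ k, (Fin (k + 1) → V) → Prop) (k ℓ : ℕ) :=
  letI : HasQuotient (LinearMap.ker (dROut R G P ℓ k))
      (Submodule R (LinearMap.ker (dROut R G P ℓ k))) :=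
      @Submodule.hasQuotient R (LinearMap.ker (dROut R G P ℓ k)) _ _ _
  LinearMap.ker (dROut R G P ℓ k) ⧸
    (LinearMap.range (dROut R G P ℓ (k + 1))).comap (LinearMap.ker (dROut R G P ℓ k)).subtype

/-- Embedding of the subcomplex chains into the free module on all tuples of vertices. -/
noncomputable def eR (R : Type) [CommRing R] (G : DGraph V)
    (P : ∀ k, (Fin (k + 1) → V) → Prop) (k ℓ : ℕ) :
    RMod R G P k ℓ →ₗ[R] ((Fin (k + 1) → V) →₀ R) :=
  Finsupp.lmapDomain R R Subtype.val

/-- `A ⊆ V`, with projection `π`, is a cofibration in `G`: an induced subgraph inclusion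
with no edges from outside `A` into `A`, such that every vertex `x` in the reach of `A`
has a projection `π x ∈ A` with `d(a,x) = d(a,π x) + d(π x,x)` for all `a ∈ A`. -/
def IsCofib (G : DGraph V) (A : Set V) (π : V → V) : Prop :=
  (∀ u v : V, u ∉ A → v ∈ A → ¬ G.Adj u v) ∧
  (∀ x : V, (∃ a ∈ A, G.Reaches a x) →
    π x ∈ A ∧ ∀ a ∈ A, G.edist a x = G.edist a (π x) + G.edist (π x) x)

/-- The predicate cutting out the subcomplex `A_{*,ℓ}(a,x)` of `MC_{*,ℓ}(X)`: tuples
starting at `a`, ending at `x`, with all intermediate entries in `A`. -/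
def AP (A : Set V) (a x : V) : ∀ k, (Fin (k + 1) → V) → Prop :=
  fun k f => f 0 = a ∧ f (Fin.last k) = x ∧
    ∀ i : Fin (k + 1), i ≠ 0 → i ≠ Fin.last k → f i ∈ A

lemma edist_eq_zero_imp {V : Type} (G : DGraph V) {x y : V} (h : G.edist x y = 0) : x = y := by
  by_contra hne
  have h1 : (1 : ℕ∞) ≤ G.edist x y := by
    apply le_sInf
    rintro n ⟨m, rfl, hm⟩
    match m with
    | 0 =>
      obtain ⟨f, hf0, hfn, _⟩ := hm
      exact absurd (hf0.symm.trans hfn) hne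
    | (m+1) => exact_mod_cast Nat.succ_le_succ (Nat.zero_le m)
  rw [h] at h1
  exact absurd h1 (by simp)

/-- let `A ↪ X` be a cofibration, `x ∉ A` in the reach of `A`, `a = π x`,
and `ℓ = d(a,x) < ∞`.  Then the homology of `A_{*,ℓ}(a,x)` is a single copy of `R` in
degree `1`, generated by the class of the tuple `(π x, x)`. -/
theorem cofib_subcomplex_homology (R : Type) [CommRing R] (G : DGraph V) (A : Set V)
    (π : V → V) (hco : IsCofib G A π) (x : V) (hx : x ∉ A)
    (hr : ∃ a ∈ A, G.Reaches a x) (ℓ : ℕ) (hℓ : (ℓ : ℕ∞) = G.edist (π x) x) :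
    (∀ k, k ≠ 1 → ∀ c : RH R G (AP A (π x) x) k ℓ, c = 0) ∧
    ∃ (b : RCb G (AP A (π x) x) 1 ℓ) (z : LinearMap.ker (dROut R G (AP A (π x) x) ℓ 1)),
      b.1 = ![π x, x] ∧ (z : RMod R G (AP A (π x) x) 1 ℓ) = Finsupp.single b 1 ∧
      (∀ y : RH R G (AP A (π x) x) 1 ℓ,
        ∃ r : R, y = r • (Submodule.Quotient.mk z : RH R G (AP A (π x) x) 1 ℓ)) ∧
      (∀ r : R, r • (Submodule.Quotient.mk z : RH R G (AP A (π x) x) 1 ℓ) = 0 → r = 0) := by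
  classical
  obtain ⟨ha, hd⟩ := hco.2 x hr
  set a := π x with hadef
  have hax : a ≠ x := fun h => hx (h ▸ ha)
  have hℓ0 : ℓ ≠ 0 := by
    intro h
    subst h
    exact hax (edist_eq_zero_imp G hℓ.symm)
  -- degree 0 is empty
  have empty0 : IsEmpty (RCb G (AP A a x) 0 ℓ) := by
    constructor
    rintro ⟨f, _, h0, hlast, _⟩
    exact hax (h0.symm.trans hlast)
  -- degrees ≥ 2 are empty
  have emptyS : ∀ m : ℕ, IsEmpty (RCb G (AP A a x) (m+2) ℓ) := by
    intro m
    constructor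
    rintro ⟨f, ⟨hne, hlen⟩, h0, hlast, hmid⟩
    have hmem : f ((Fin.last (m+1)).castSucc) ∈ A := by
      apply hmid
      · intro h
        have := congrArg Fin.val h
        simp [Fin.ext_iff] at this
      · intro h
        have := congrArg Fin.val h
        simp [Fin.ext_iff] at this
    have hfsucc : f ((Fin.last (m+1)).succ) = x := by
      rw [Fin.succ_last]; exact hlast
    have ht1 : G.edist (f ((Fin.last (m+1)).castSucc)) (f ((Fin.last (m+1)).succ))
        = G.edist (f ((Fin.last (m+1)).castSucc)) a + (ℓ : ℕ∞) := by
      rw [hfsucc, hd _ hmem, hℓ]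
    have ht0 : (1 : ℕ∞) ≤ G.edist (f ((0 : Fin (m+2)).castSucc)) (f ((0 : Fin (m+2)).succ)) :=
      ENat.one_le_iff_ne_zero.2 (hne 0).1
    have hne2 : (0 : Fin (m+2)) ≠ Fin.last (m+1) := by
      intro h
      have := congrArg Fin.val h
      simp [Fin.ext_iff] at this
    have hsum : G.edist (f ((0 : Fin (m+2)).castSucc)) (f ((0 : Fin (m+2)).succ))
        + G.edist (f ((Fin.last (m+1)).castSucc)) (f ((Fin.last (m+1)).succ)) ≤ G.tlen f := by
      have h2 : ∑ i ∈ ({0, Fin.last (m+1)} : Finset (Fin (m+2))),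
          G.edist (f i.castSucc) (f i.succ)
          ≤ ∑ i : Fin (m+2), G.edist (f i.castSucc) (f i.succ) :=
        Finset.sum_le_sum_of_subset (Finset.subset_univ _)
      rw [Finset.sum_pair hne2] at h2
      rw [DGraph.tlen]
      exact h2
    rw [hlen, ht1] at hsum
    have hfin : (1 : ℕ∞) + (ℓ : ℕ∞) ≤ (ℓ : ℕ∞) :=
      le_trans (add_le_add ht0 le_add_self) hsum
    have : ((1 + ℓ : ℕ) : ℕ∞) ≤ ((ℓ : ℕ) : ℕ∞) := by push_cast; exact hfin
    have := Nat.cast_le.1 this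
    omega
  haveI := empty0
  have sub0 : Subsingleton (RMod R G (AP A a x) 0 ℓ) :=
    ⟨fun f g => Finsupp.ext fun z => (empty0.false z).elim⟩
  have trivH : ∀ k, IsEmpty (RCb G (AP A a x) k ℓ) → ∀ c : RH R G (AP A a x) k ℓ, c = 0 := by
    intro k hk c
    haveI : Subsingleton (RMod R G (AP A a x) k ℓ) :=
      ⟨fun f g => Finsupp.ext fun z => (hk.false z).elim⟩
    obtain ⟨w, rfl⟩ := Submodule.Quotient.mk_surjective _ c
    have hw : w = 0 := Subtype.ext (Subsingleton.elim _ _)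
    rw [hw]
    simp
  -- the basis element in degree 1
  have hcast : (ℓ : ℕ∞) ≠ 0 := by exact_mod_cast hℓ0
  have hval : MCValid G 1 ℓ ![a, x] := by
    constructor
    · intro i
      have hi : i = 0 := Subsingleton.elim i 0
      subst hi
      refine ⟨?_, ?_⟩
      · show G.edist a x ≠ 0
        rw [← hℓ]; exact hcast
      · show G.edist a x ≠ ⊤
        rw [← hℓ]; simp
    · rw [DGraph.tlen, Fin.sum_univ_one]
      exact hℓ.symm
  have hap : AP A a x 1 ![a, x] := by
    refine ⟨rfl, rfl, ?_⟩
    intro i h0 h1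
    fin_cases i
    · exact absurd rfl h0
    · exact absurd rfl h1
  have huniq : ∀ g : RCb G (AP A a x) 1 ℓ, g.1 = ![a, x] := by
    intro g
    funext i
    fin_cases i
    · exact g.2.2.1
    · exact g.2.2.2.1
  refine ⟨?_, ?_⟩
  · intro k hk c
    match k with
    | 0 => exact trivH 0 empty0 c
    | 1 => exact absurd rfl hk
    | (m+2) => exact trivH _ (emptyS m) c
  · set b : RCb G (AP A a x) 1 ℓ := ⟨![a, x], hval, hap⟩ with hbdef
    have hker : Finsupp.single b (1 : R) ∈ LinearMap.ker (dROut R G (AP A a x) ℓ 1) :=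
      LinearMap.mem_ker.2 (Subsingleton.elim _ _)
    set z : LinearMap.ker (dROut R G (AP A a x) ℓ 1) := ⟨Finsupp.single b 1, hker⟩ with hzdef
    refine ⟨b, z, rfl, rfl, ?_, ?_⟩
    · intro y
      obtain ⟨w, rfl⟩ := Submodule.Quotient.mk_surjective _ y
      refine ⟨(w : RMod R G (AP A a x) 1 ℓ) b, ?_⟩
      have hw : (w : RMod R G (AP A a x) 1 ℓ)
          = ((w : RMod R G (AP A a x) 1 ℓ) b) • Finsupp.single b (1 : R) := by
        ext c
        have hc : c = b := Subtype.ext ((huniq c).trans (huniq b).symm)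
        subst hc
        simp
      have hwz : w = ((w : RMod R G (AP A a x) 1 ℓ) b) • z := by
        apply Subtype.ext
        conv_lhs => rw [hw]
        rfl
      conv_lhs => rw [hwz]
      rw [Submodule.Quotient.mk_smul]
    · intro r hr0
      rw [← Submodule.Quotient.mk_smul, Submodule.Quotient.mk_eq_zero] at hr0
      obtain ⟨u, hu⟩ := Submodule.mem_comap.1 hr0
      haveI : IsEmpty (RCb G (AP A a x) 2 ℓ) := emptyS 0
      haveI : Subsingleton (RMod R G (AP A a x) 2 ℓ) :=
        ⟨fun f g => Finsupp.ext fun w => (this.false w).elim⟩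
      have hu0 : u = 0 := Subsingleton.elim _ _
      rw [hu0, map_zero] at hu
      have : (0 : RMod R G (AP A a x) 1 ℓ) b = (r • Finsupp.single b (1 : R)) b := by
        rw [hu]; rfl
      simpa using this.symm
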